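/- Let E be a real vector space, C ⊆ E convex, F a face of C, and λ ∈ F. Then the tangent cone T_λ(F) is a face of the tangent cone T_λ(C), where T_λ(C) is the union of the rays λ + ℝ≥0·(c − λ) over all c ∈ C. -/

import Mathlib

open Finset

/-- `F` is a face of the convex set `C`. -/
def IsFaceOf {E : Type*} [AddCommGroup E] [Module ℝ E] (C F : Set E) : Prop :=
  Convex ℝ F ∧ F ⊆ C ∧
    ∀ (n : ℕ) (c : Fin n → E) (t : Fin n → ℝ),
      (∀ i, c i ∈ C) → (∀ i, 0 < t i) → (∑ i, t i = 1) →
      (∑ i, t i • c i) ∈ F → ∀ i, c i ∈ F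

/-- The tangent cone of `C` at `x`: the union of the rays `x + ℝ≥0 • (c - x)` over `c ∈ C`. -/
def tanConeAt {E : Type*} [AddCommGroup E] [Module ℝ E] (C : Set E) (x : E) : Set E :=
  {y | ∃ c ∈ C, ∃ t : ℝ, 0 ≤ t ∧ y = x + t • (c - x)}

lemma tanConeAt_convex {E : Type*} [AddCommGroup E] [Module ℝ E] {S : Set E} (hS : Convex ℝ S)
    (x : E) : Convex ℝ (tanConeAt S x) := by
  rintro y₁ ⟨c₁, hc₁, t₁, ht₁, rfl⟩ y₂ ⟨c₂, hc₂, t₂, ht₂, rfl⟩ a b ha hb hab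
  rcases eq_or_lt_of_le (by positivity : (0:ℝ) ≤ a * t₁ + b * t₂) with hT | hT
  · refine ⟨c₁, hc₁, 0, le_refl 0, ?_⟩
    have h1 : a * t₁ = 0 := by nlinarith [mul_nonneg ha ht₁, mul_nonneg hb ht₂]
    have h2 : b * t₂ = 0 := by nlinarith [mul_nonneg ha ht₁, mul_nonneg hb ht₂]
    have hb' : b = 1 - a := by linarith
    subst hb'
    match_scalars <;> nlinarith
  · set T := a * t₁ + b * t₂ with hTdef
    refine ⟨(a * t₁ / T) • c₁ + (b * t₂ / T) • c₂, ?_, T, le_of_lt hT, ?_⟩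
    · exact hS hc₁ hc₂ (by positivity) (by positivity) (by field_simp; exact hTdef.symm)
    · have hb' : b = 1 - a := by linarith
      subst hb'
      match_scalars <;> field_simp <;> ring

lemma face_mem_of_pos {E : Type*} [AddCommGroup E] [Module ℝ E] {C F : Set E}
    (hC : Convex ℝ C) (hF : IsFaceOf C F) {n : ℕ} {d : Fin n → E} {μ : Fin n → ℝ}
    (hd : ∀ j, d j ∈ C) (hμ0 : ∀ j, 0 ≤ μ j) (hμ1 : ∑ j, μ j = 1)
    (hp : (∑ j, μ j • d j) ∈ F) {i : Fin n} (hi : 0 < μ i) : d i ∈ F := by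
  set p := ∑ j, μ j • d j with hpdef
  have hsplit : p = μ i • d i + ∑ j ∈ univ.erase i, μ j • d j := by
    rw [hpdef, ← Finset.add_sum_erase _ _ (mem_univ i)]
  have hsum_erase : ∑ j ∈ univ.erase i, μ j = 1 - μ i := by
    have := Finset.add_sum_erase univ μ (mem_univ i)
    linarith [hμ1 ▸ this.symm]
  rcases eq_or_lt_of_le (by linarith [Finset.single_le_sum (f := μ) (fun j _ => hμ0 j) (mem_univ i)] : μ i ≤ 1) with h1 | h1
  · have hz : ∀ j ∈ univ.erase i, μ j = 0 := by
      intro j hj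
      have h0 : ∑ j ∈ univ.erase i, μ j = 0 := by rw [hsum_erase, h1]; ring
      exact (Finset.sum_eq_zero_iff_of_nonneg (fun k _ => hμ0 k)).mp h0 j hj
    have : p = d i := by
      rw [hsplit, h1, one_smul, Finset.sum_eq_zero (fun j hj => by rw [hz j hj, zero_smul]),
        add_zero]
    exact this ▸ hp
  · set m := 1 - μ i with hm
    have hm0 : 0 < m := by linarith
    set q := m⁻¹ • (p - μ i • d i) with hq
    have hqC : q ∈ C := by
      have : q = ∑ j ∈ univ.erase i, (μ j / m) • d j := by
        rw [hq, hsplit, add_sub_cancel_left, Finset.smul_sum]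
        refine Finset.sum_congr rfl fun j _ => ?_
        rw [smul_smul, div_eq_inv_mul]
      rw [this]
      refine hC.sum_mem (fun j _ => div_nonneg (hμ0 j) hm0.le) ?_ (fun j _ => hd j)
      rw [← Finset.sum_div, hsum_erase, div_self hm0.ne']
    have key := hF.2.2 2 ![d i, q] ![μ i, m] ?_ ?_ ?_ ?_ 0
    · simpa using key
    · intro j; fin_cases j <;> simp [hF.2.1, hd i, hqC]
    · intro j; fin_cases j <;> simp [hi, hm0]
    · simp [Fin.sum_univ_two, hm]
    · have : ∑ j, (![μ i, m] j) • (![d i, q] j) = p := by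
        simp [Fin.sum_univ_two, hq, smul_smul, mul_inv_cancel₀ hm0.ne']
      rw [this]; exact hp

/-- If `F` is a face of a convex set `C` and `λ ∈ F`, then the tangent cone `T_λ F` is a face of
the tangent cone `T_λ C`. -/
theorem tangentCone_face {E : Type*} [AddCommGroup E] [Module ℝ E]
    (C F : Set E) (hC : Convex ℝ C) (hF : IsFaceOf C F) (lam : E) (hlam : lam ∈ F) :
    IsFaceOf (tanConeAt C lam) (tanConeAt F lam) := by
  refine ⟨tanConeAt_convex hF.1 lam, ?_, ?_⟩
  · rintro y ⟨f, hf, t, ht, rfl⟩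
    exact ⟨f, hF.2.1 hf, t, ht, rfl⟩
  · intro n c t hc ht ht1 hsum
    choose d hd s hs hcs using hc
    obtain ⟨f, hf, r0, hr0, heq⟩ := hsum
    set S := ∑ i, t i * s i with hSdef
    have hS0 : 0 ≤ S := Finset.sum_nonneg fun i _ => mul_nonneg (ht i).le (hs i)
    -- the key linear identity
    have h1 : ∑ i, t i • c i = lam + ∑ i, (t i * s i) • (d i - lam) := by
      have : ∀ i : Fin n, t i • c i = t i • lam + (t i * s i) • (d i - lam) := by
        intro i; rw [hcs i]; module
      rw [Finset.sum_congr rfl fun i _ => this i, Finset.sum_add_distrib, ← Finset.sum_smul,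
        ht1, one_smul]
    have hA : ∑ i, (t i * s i) • (d i - lam) = r0 • (f - lam) :=
      add_left_cancel (h1.symm.trans heq)
    rcases eq_or_lt_of_le hS0 with hSz | hSpos
    · -- S = 0: all s i = 0 and c i = lam
      intro i
      have hz : t i * s i = 0 :=
        (Finset.sum_eq_zero_iff_of_nonneg
          (fun j _ => mul_nonneg (ht j).le (hs j))).mp hSz.symm i (mem_univ i)
      have hsi : s i = 0 := by
        rcases mul_eq_zero.mp hz with h | h
        · exact absurd h (ht i).ne'
        · exact h
      exact ⟨lam, hlam, 0, le_rfl, by rw [hcs i, hsi]; module⟩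
    · set μ := fun i => t i * s i / S with hμdef
      have hμ0 : ∀ i, 0 ≤ μ i := fun i => div_nonneg (mul_nonneg (ht i).le (hs i)) hS0
      have hμ1 : ∑ i, μ i = 1 := by
        rw [hμdef, ← Finset.sum_div, ← hSdef, div_self hSpos.ne']
      set r := r0 / S with hr
      have hpeq : ∑ i, μ i • d i = lam + r • (f - lam) := by
        have step : ∀ i : Fin n, μ i • d i = S⁻¹ • ((t i * s i) • (d i - lam)) + μ i • lam := by
          intro i
          show (t i * s i / S) • d i = S⁻¹ • ((t i * s i) • (d i - lam)) + (t i * s i / S) • lam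
          rw [smul_smul]
          match_scalars <;> field_simp <;> ring
        rw [Finset.sum_congr rfl fun i _ => step i, Finset.sum_add_distrib, ← Finset.smul_sum,
          hA, ← Finset.sum_smul, hμ1, one_smul, smul_smul, hr]
        rw [inv_mul_eq_div]
        abel
      have hpC : (∑ i, μ i • d i) ∈ C :=
        hC.sum_mem (fun i _ => hμ0 i) hμ1 (fun i _ => hd i)
      have hr0' : 0 ≤ r := div_nonneg hr0 hS0
      -- the point p = lam + r•(f-lam) is in F
      have hpF : (∑ i, μ i • d i) ∈ F := by
        rcases le_or_gt r 1 with hr1 | hr1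
        · have := hF.1 hlam hf (by linarith : (0:ℝ) ≤ 1 - r) hr0' (by ring)
          rw [hpeq]
          convert this using 1
          module
        · have key := hF.2.2 2 ![lam, ∑ i, μ i • d i] ![1 - r⁻¹, r⁻¹] ?_ ?_ ?_ ?_ 1
          · simpa using key
          · intro j; fin_cases j <;> simp [hF.2.1 hlam, hpC]
          · have h0r : 0 < r⁻¹ := by positivity
            have h1r : r⁻¹ < 1 := by
              rw [inv_lt_one_iff₀]; right; exact hr1
            intro j; fin_cases j <;> simp [h0r] <;> linarith
          · simp [Fin.sum_univ_two]
          · have : ∑ j, (![(1:ℝ) - r⁻¹, r⁻¹] j) • (![lam, ∑ i, μ i • d i] j) = f := by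
              rw [Fin.sum_univ_two]
              simp only [Matrix.cons_val_zero, Matrix.cons_val_one, Matrix.head_cons]
              rw [hpeq, smul_add, smul_smul, inv_mul_cancel₀ (by positivity : r ≠ 0)]
              module
            rw [this]; exact hf
      intro i
      rcases eq_or_lt_of_le (hs i) with hsi | hsi
      · exact ⟨lam, hlam, 0, le_rfl, by rw [hcs i, ← hsi]; module⟩
      · have hdi : d i ∈ F := by
          refine face_mem_of_pos hC hF hd hμ0 hμ1 hpF ?_
          exact div_pos (mul_pos (ht i) hsi) hSpos
        exact ⟨d i, hdi, s i, (hs i), hcs i⟩
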